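/- Let A be a unital C*-algebra and suppose a ∈ A is the norm limit of a sequence of nilpotent elements of A. Then 0 ∈ spectrum(a) and spectrum(a) is connected. -/

import Mathlib

open Metric Set

/-- Quantitative perturbation of units: if `‖u⁻¹‖ * ‖t‖ ≤ 1/2` then `u + t` is a unit whose
inverse has norm at most `2 * ‖u⁻¹‖`. -/
lemma aux_pert {A : Type*} [NormedRing A] [CompleteSpace A] [NormOneClass A]
    (u : Aˣ) (t : A) (h : ‖(↑u⁻¹ : A)‖ * ‖t‖ ≤ 1 / 2) :
    ∃ v : Aˣ, (↑v : A) = ↑u + t ∧ ‖(↑v⁻¹ : A)‖ ≤ 2 * ‖(↑u⁻¹ : A)‖ := by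
  set s : A := -((↑u⁻¹ : A) * t) with hs_def
  have hs_half : ‖s‖ ≤ 1 / 2 := by
    calc ‖s‖ = ‖(↑u⁻¹ : A) * t‖ := norm_neg _
    _ ≤ ‖(↑u⁻¹ : A)‖ * ‖t‖ := norm_mul_le _ _
    _ ≤ 1 / 2 := h
  have hs1 : ‖s‖ < 1 := lt_of_le_of_lt hs_half (by norm_num)
  let w : Aˣ := Units.oneSub s hs1
  refine ⟨u * w, ?_, ?_⟩
  · have : (↑w : A) = 1 + (↑u⁻¹ : A) * t := by
      simp [w, Units.val_oneSub, hs_def, sub_neg_eq_add]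
    rw [Units.val_mul, this, mul_add, mul_one, ← mul_assoc, Units.mul_inv, one_mul]
  · have hw : ‖(↑w⁻¹ : A)‖ ≤ 2 := by
      have h1 : (↑w⁻¹ : A) = ∑' n : ℕ, s ^ n := rfl
      have h2 := tsum_geometric_le_of_norm_lt_one s hs1
      rw [h1]
      have h3 : (1 - ‖s‖)⁻¹ ≤ 2 := by
        rw [inv_le_comm₀ (by linarith) (by norm_num)]
        linarith
      calc ‖∑' n : ℕ, s ^ n‖ ≤ ‖(1 : A)‖ - 1 + (1 - ‖s‖)⁻¹ := h2
      _ = (1 - ‖s‖)⁻¹ := by rw [norm_one]; ring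
      _ ≤ 2 := h3
    calc ‖(↑(u * w)⁻¹ : A)‖ = ‖(↑w⁻¹ : A) * (↑u⁻¹ : A)‖ := by rw [mul_inv_rev]; rfl
    _ ≤ ‖(↑w⁻¹ : A)‖ * ‖(↑u⁻¹ : A)‖ := norm_mul_le _ _
    _ ≤ 2 * ‖(↑u⁻¹ : A)‖ := by
        gcongr

/-- A nilpotent element's spectrum is contained in `{0}`: every nonzero scalar is in the
resolvent set. -/
lemma aux_nilp_res {A : Type*} [NormedRing A] [NormedAlgebra ℂ A] (b : A)
    (hb : IsNilpotent b) {z : ℂ} (hz : z ≠ 0) : z ∈ resolventSet ℂ b := by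
  rw [spectrum.mem_resolventSet_iff]
  have h1 : IsUnit (algebraMap ℂ A z) := (isUnit_iff_ne_zero.mpr hz).map (algebraMap ℂ A)
  have h2 : IsNilpotent (-b) := hb.neg
  have h3 : Commute (-b) (algebraMap ℂ A z) := (Algebra.commutes z (-b)).symm
  simpa [sub_eq_add_neg] using h2.isUnit_add_left_of_commute h1 h3

/-- If `a` is the norm limit of a sequence of nilpotent elements of a unital C*-algebra,
then `0 ∈ spectrum a` and the spectrum of `a` is connected. -/
theorem stmt17 {A : Type*} [NormedRing A] [StarRing A] [CStarRing A] [CompleteSpace A]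
    [NormedAlgebra ℂ A] [StarModule ℂ A] [Nontrivial A]
    (a : A) (Q : ℕ → A) (hQ : ∀ n, ∃ m : ℕ, 1 ≤ m ∧ Q n ^ m = 0)
    (h : Filter.Tendsto Q Filter.atTop (nhds a)) :
    0 ∈ spectrum ℂ a ∧ IsConnected (spectrum ℂ a) := by
  have hnilp : ∀ n, IsNilpotent (Q n) := fun n => by
    obtain ⟨m, _, hm⟩ := hQ n
    exact ⟨m, hm⟩
  -- First: 0 ∈ spectrum a
  have h0 : (0 : ℂ) ∈ spectrum ℂ a := by
    rw [spectrum.zero_mem_iff]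
    intro ha
    have : {x : A | IsUnit x} ∈ nhds a := Units.isOpen.mem_nhds ha
    obtain ⟨n, hn⟩ := (h.eventually this).exists
    exact (hnilp n).not_isUnit hn
  refine ⟨h0, ⟨⟨0, h0⟩, ?_⟩⟩
  -- Connectedness: by contradiction
  by_contra hconn
  rw [isPreconnected_iff_subset_of_fully_disjoint_closed (spectrum.isClosed a)] at hconn
  push_neg at hconn
  obtain ⟨K', L', hK'c, hL'c, hsub, hdisj, hK's, hL's⟩ := hconn
  -- Normalize: K contains 0, L does not
  have key : ∀ K L : Set ℂ, IsClosed K → IsClosed L → spectrum ℂ a ⊆ K ∪ L →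
      Disjoint K L → (0 : ℂ) ∈ K → ((spectrum ℂ a) ∩ L).Nonempty → False := by
    intro K L hKc hLc hKL hdKL h0K hLne
    -- Work with the pieces of the spectrum
    set σK : Set ℂ := spectrum ℂ a ∩ (K ∪ {0}) with hσK_def
    set σL : Set ℂ := spectrum ℂ a ∩ L with hσL_def
    have hσL_ne : σL.Nonempty := hLne
    have hσLc : IsCompact σL := ((spectrum.isCompact a).inter_right hLc)
    have hσKc : IsCompact σK := (spectrum.isCompact a).inter_right (hKc.union isClosed_singleton)
    have h0σK : (0 : ℂ) ∈ σK := ⟨h0, Or.inl h0K⟩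
    have hσK_ne : σK.Nonempty := ⟨0, h0σK⟩
    have hdisj2 : Disjoint σK σL := by
      apply Set.disjoint_left.mpr
      rintro z ⟨hzσ, hzK⟩ ⟨_, hzL⟩
      rcases hzK with hzK | hz0
      · exact Set.disjoint_left.mp hdKL hzK hzL
      · rw [Set.mem_singleton_iff] at hz0
        subst hz0
        exact Set.disjoint_left.mp hdKL h0K hzL
    -- minimal distance from σK to σL
    obtain ⟨x0, hx0K, hx0min⟩ := hσKc.exists_isMinOn hσK_ne
      (continuous_infDist_pt σL).continuousOn
    set d : ℝ := infDist x0 σL with hd_def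
    have hd_pos : 0 < d := by
      rw [hd_def, ← (hσLc.isClosed.notMem_iff_infDist_pos hσL_ne)]
      exact fun hx => Set.disjoint_left.mp hdisj2 hx0K hx
    set ε : ℝ := d / 2 with hε_def
    have hε_pos : 0 < ε := by positivity
    -- the open set V around σL
    set V : Set ℂ := {z | infDist z σL < ε} with hV_def
    have hV_open : IsOpen V := isOpen_lt (continuous_infDist_pt σL) continuous_const
    have hLV : σL ⊆ V := fun z hz => by
      simp only [hV_def, Set.mem_setOf_eq, infDist_zero_of_mem hz]; exact hε_pos
    have hclV : closure V ⊆ {z | infDist z σL ≤ ε} :=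
      closure_minimal (Set.setOf_subset_setOf.mpr fun z => le_of_lt)
        (isClosed_le (continuous_infDist_pt σL) continuous_const)
    -- V is bounded
    obtain ⟨y0, hy0⟩ := hσL_ne
    have hV_bdd : Bornology.IsBounded V := by
      apply (isBounded_closedBall (x := y0) (r := ε + diam σL)).subset
      intro z hz
      obtain ⟨y, hy, hdy⟩ := (infDist_lt_iff ⟨y0, hy0⟩).mp hz
      have : dist z y0 ≤ dist z y + dist y y0 := dist_triangle _ _ _
      have hyy0 : dist y y0 ≤ diam σL := dist_le_diam_of_mem hσLc.isBounded hy hy0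
      rw [mem_closedBall]
      linarith
    -- frontier V avoids the spectrum
    have hfr : ∀ z ∈ frontier V, infDist z σL = ε := by
      intro z hz
      have h1 : z ∈ closure V := hz.1
      have h2 : z ∉ V := fun hzV => hz.2 (by rwa [hV_open.interior_eq])
      exact le_antisymm (hclV h1) (not_lt.mp h2)
    have hfr_res : ∀ z : ℂ, infDist z σL = ε → z ∈ resolventSet ℂ a := by
      intro z hz
      rw [spectrum.mem_resolventSet_iff, ← spectrum.notMem_iff]
      intro hzσ
      rcases hKL hzσ with hzK | hzL
      · -- z ∈ K: distance to σL at least d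
        have : d ≤ infDist z σL := hx0min ⟨hzσ, Or.inl hzK⟩
        rw [hz] at this
        linarith
      · have : infDist z σL = 0 := infDist_zero_of_mem ⟨hzσ, hzL⟩
        rw [hz] at this
        linarith
    -- bound the resolvent of a on the "sphere" C
    set Csph : Set ℂ := {z | infDist z σL = ε} with hC_def
    have hC_cpt : IsCompact Csph := by
      have hCc : IsClosed Csph := isClosed_eq (continuous_infDist_pt σL) continuous_const
      have hCb : Bornology.IsBounded Csph := by
        apply (isBounded_closedBall (x := y0) (r := ε + 1 + diam σL)).subset
        intro z hz
        have hzlt : infDist z σL < ε + 1 := by rw [hz]; linarith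
        obtain ⟨y, hy, hdy⟩ := (infDist_lt_iff ⟨y0, hy0⟩).mp hzlt
        have : dist z y0 ≤ dist z y + dist y y0 := dist_triangle _ _ _
        have hyy0 : dist y y0 ≤ diam σL := dist_le_diam_of_mem hσLc.isBounded hy hy0
        rw [mem_closedBall]
        linarith
      exact Metric.isCompact_of_isClosed_isBounded hCc hCb
    have hres_cont : ContinuousOn (resolvent a) Csph := fun z hz =>
      ((spectrum.hasDerivAt_resolvent (hfr_res z hz)).continuousAt).continuousWithinAt
    obtain ⟨M, hM⟩ := hC_cpt.exists_bound_of_continuousOn hres_cont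
    set M' : ℝ := max M 1 with hM'_def
    have hM'_pos : 0 < M' := lt_of_lt_of_le one_pos (le_max_right _ _)
    have hM'_bd : ∀ z ∈ Csph, ‖resolvent a z‖ ≤ M' := fun z hz =>
      le_trans (hM z hz) (le_max_left _ _)
    -- choose n with ‖Q n - a‖ < (2 M')⁻¹
    have hδpos : 0 < (2 * M')⁻¹ := by positivity
    obtain ⟨N, hN⟩ := (Metric.tendsto_atTop.mp h) ((2 * M')⁻¹) hδpos
    have hQa : ‖Q N - a‖ < (2 * M')⁻¹ := by
      have := hN N (le_refl N)
      rwa [dist_eq_norm] at this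
    -- frontier bound for the resolvent of Q N
    have hfrontier_bd : ∀ z ∈ frontier V, ‖resolvent (Q N) z‖ ≤ 2 * M' := by
      intro z hz
      have hzC : z ∈ Csph := hfr z hz
      have hzres : z ∈ resolventSet ℂ a := hfr_res z (hfr z hz)
      have hu : IsUnit (algebraMap ℂ A z - a) := spectrum.mem_resolventSet_iff.mp hzres
      have hres_eq : resolvent a z = ↑hu.unit⁻¹ := by
        have h' := Ring.inverse_unit hu.unit
        rw [hu.unit_spec] at h'
        rw [resolvent]; exact h'
      have hu_bd : ‖(↑hu.unit⁻¹ : A)‖ ≤ M' := by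
        rw [← hres_eq]; exact hM'_bd z hzC
      -- perturbation
      have hprod : ‖(↑hu.unit⁻¹ : A)‖ * ‖a - Q N‖ ≤ 1 / 2 := by
        rw [norm_sub_rev]
        calc ‖(↑hu.unit⁻¹ : A)‖ * ‖Q N - a‖ ≤ M' * (2 * M')⁻¹ := by
              apply mul_le_mul hu_bd (le_of_lt hQa) (norm_nonneg _) (le_of_lt hM'_pos)
        _ = 1 / 2 := by field_simp
      obtain ⟨v, hv_eq, hv_bd⟩ := aux_pert hu.unit (a - Q N) hprod
      have hv_eq2 : (↑v : A) = algebraMap ℂ A z - Q N := by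
        rw [hv_eq, hu.unit_spec]; exact sub_add_sub_cancel _ _ _
      have : resolvent (Q N) z = ↑v⁻¹ := by
        rw [resolvent, ← hv_eq2, Ring.inverse_unit]
      rw [this]
      calc ‖(↑v⁻¹ : A)‖ ≤ 2 * ‖(↑hu.unit⁻¹ : A)‖ := hv_bd
      _ ≤ 2 * M' := by linarith
    -- the resolvent of Q N is holomorphic on a neighborhood of closure V
    have h0clV : ∀ z ∈ closure V, z ≠ 0 := by
      intro z hz hz0
      subst hz0
      have h1 : infDist (0 : ℂ) σL ≤ ε := hclV hz
      have h2 : d ≤ infDist (0 : ℂ) σL := hx0min h0σK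
      linarith
    have hdiff : DiffContOnCl ℂ (resolvent (Q N)) V := by
      have hdOn : ∀ z ∈ closure V, DifferentiableAt ℂ (resolvent (Q N)) z := by
        intro z hz
        exact (spectrum.hasDerivAt_resolvent
          (aux_nilp_res (Q N) (hnilp N) (h0clV z hz))).differentiableAt
      exact ⟨fun z hz => (hdOn z (subset_closure hz)).differentiableWithinAt,
        fun z hz => (hdOn z hz).continuousAt.continuousWithinAt⟩
    -- maximum principle: bound the resolvent of Q N on σL
    obtain ⟨lam, hlam⟩ : σL.Nonempty := ⟨y0, hy0⟩
    have hlam_clV : lam ∈ closure V := subset_closure (hLV hlam)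
    have hlam_bd : ‖resolvent (Q N) lam‖ ≤ 2 * M' :=
      Complex.norm_le_of_forall_mem_frontier_norm_le hV_bdd hdiff hfrontier_bd hlam_clV
    -- contradiction: lam - a is invertible
    have hlam_ne : lam ≠ 0 := by
      intro hl; subst hl
      exact Set.disjoint_left.mp hdisj2 h0σK hlam
    have hvu : IsUnit (algebraMap ℂ A lam - Q N) :=
      spectrum.mem_resolventSet_iff.mp (aux_nilp_res (Q N) (hnilp N) hlam_ne)
    have hres_eq : resolvent (Q N) lam = ↑hvu.unit⁻¹ := by
      have h' := Ring.inverse_unit hvu.unit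
      rw [hvu.unit_spec] at h'
      rw [resolvent]; exact h'
    have hvu_bd : ‖(↑hvu.unit⁻¹ : A)‖ ≤ 2 * M' := by rw [← hres_eq]; exact hlam_bd
    have hvu_pos : 0 < ‖(↑hvu.unit⁻¹ : A)‖ := Units.norm_pos _
    have hlt : ‖Q N - a‖ < ‖(↑hvu.unit⁻¹ : A)‖⁻¹ := by
      calc ‖Q N - a‖ < (2 * M')⁻¹ := hQa
      _ ≤ ‖(↑hvu.unit⁻¹ : A)‖⁻¹ := by
          apply inv_anti₀ hvu_pos hvu_bd
    have hunit : IsUnit (algebraMap ℂ A lam - a) := by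
      have := (hvu.unit.add (Q N - a) hlt).isUnit
      rw [Units.val_add] at this
      have heq : (↑hvu.unit : A) + (Q N - a) = algebraMap ℂ A lam - a := by
        rw [hvu.unit_spec]; exact sub_add_sub_cancel _ _ _
      rwa [heq] at this
    exact (spectrum.notMem_iff.mpr hunit) hlam.1
  -- apply the key lemma to the right labeling
  have hneL : (spectrum ℂ a ∩ L').Nonempty := by
    obtain ⟨x, hx, hxK⟩ := Set.not_subset.mp hK's
    exact ⟨x, hx, (hsub hx).resolve_left hxK⟩
  have hneK : (spectrum ℂ a ∩ K').Nonempty := by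
    obtain ⟨x, hx, hxL⟩ := Set.not_subset.mp hL's
    exact ⟨x, hx, (hsub hx).resolve_right hxL⟩
  by_cases h0K : (0 : ℂ) ∈ K'
  · exact key K' L' hK'c hL'c hsub hdisj h0K hneL
  · have h0L : (0 : ℂ) ∈ L' := (hsub h0).resolve_left h0K
    exact key L' K' hL'c hK'c (by rwa [Set.union_comm]) hdisj.symm h0L hneK
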